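/- arXiv:2406.01242 — 2 statements merged into one kernel-verified Lean document; each statement's English description precedes it below -/
import Mathlib

section
/- Let (X_n^{(b)})_{b ≥ 1, n ≥ 1} be real random variables such that for each n the pairs (X_n^{(b_1)}, X_n^{(b_2)}) for b_1 ≠ b_2 are identically distributed, and suppose (X_n^{(1)}, X_n^{(2)}) converges in distribution as n → ∞ to (X^{(1)}, X^{(2)}) where X^{(1)}, X^{(2)} are independent with common continuous distribution function F. Let B(n) → ∞ and let F_n(t) = B(n)^{-1} Σ_{b=1}^{B(n)} 1{X_n^{(b)} ≤ t} be the empirical distribution function. Then E[ |F_n(t) − F(t)|^2 ] → 0 as n → ∞ for every t ∈ R; in particular F_n(t) → F(t) in probability. -/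
open MeasureTheory ProbabilityTheory Filter

/-- L² convergence of the bootstrap empirical distribution function: if for
each `n` the pairs `(X_n^{(b₁)}, X_n^{(b₂)})`, `b₁ ≠ b₂`, are identically distributed and
`(X_n^{(1)}, X_n^{(2)})` converges in distribution to an independent pair with common continuous
distribution function `F`, then for `B(n) → ∞` the empirical distribution function
`F_n(t) = B(n)⁻¹ ∑_{b=1}^{B(n)} 1{X_n^{(b)} ≤ t}` satisfies
`𝔼[|F_n(t) − F(t)|²] → 0` for every `t`; in particular `F_n(t) → F(t)` in probability. -/
theorem bootstrap_edf_L2_convergence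
    {Ω : Type*} [MeasurableSpace Ω] (μ : Measure Ω) [IsProbabilityMeasure μ]
    (X : ℕ → ℕ → Ω → ℝ) (hmeas : ∀ n b, Measurable (X n b))
    (hexch : ∀ n b₁ b₂ b₁' b₂', b₁ ≠ b₂ → b₁' ≠ b₂' →
      IdentDistrib (fun ω => (X n b₁ ω, X n b₂ ω)) (fun ω => (X n b₁' ω, X n b₂' ω)) μ μ)
    (F : ℝ → ℝ) (hF : Continuous F)
    (hjoint : ∀ s t : ℝ,
      Tendsto (fun n => (μ {ω | X n 1 ω ≤ s ∧ X n 2 ω ≤ t}).toReal) atTop (nhds (F s * F t)))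
    (hmarg : ∀ t : ℝ,
      Tendsto (fun n => (μ {ω | X n 1 ω ≤ t}).toReal) atTop (nhds (F t)))
    (B : ℕ → ℕ) (hB : Tendsto B atTop atTop) :
    ∀ t : ℝ,
      Tendsto (fun n => ∫ ω,
          |(B n : ℝ)⁻¹ * (∑ b ∈ Finset.Icc 1 (B n), if X n b ω ≤ t then (1 : ℝ) else 0)
            - F t| ^ 2 ∂μ) atTop (nhds 0) ∧
      (∀ ε : ℝ, 0 < ε →
        Tendsto (fun n => μ {ω | ε ≤
            |(B n : ℝ)⁻¹ * (∑ b ∈ Finset.Icc 1 (B n), if X n b ω ≤ t then (1 : ℝ) else 0)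
              - F t|}) atTop (nhds 0)) := by
  intro t
  set c : ℝ := F t with hc
  -- basic measurability
  have hsm : ∀ n b, MeasurableSet {ω | X n b ω ≤ t} :=
    fun n b => measurableSet_le (hmeas n b) measurable_const
  set q : ℕ → ℝ := fun n => (μ {ω | X n 1 ω ≤ t}).toReal with hqdef
  set p : ℕ → ℝ := fun n => (μ {ω | X n 1 ω ≤ t ∧ X n 2 ω ≤ t}).toReal with hpdef
  -- marginal identities
  have hqb : ∀ n b, (μ {ω | X n b ω ≤ t}).toReal = q n := by
    intro n b
    have h := (hexch n b (b + 1) 1 2 (by omega) (by omega)).comp measurable_fst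
    have h2 := h.measure_mem_eq (measurableSet_Iic (a := t))
    have e1 : ((fun ω => X n b ω) ⁻¹' Set.Iic t) = {ω | X n b ω ≤ t} := rfl
    have e2 : ((fun ω => X n 1 ω) ⁻¹' Set.Iic t) = {ω | X n 1 ω ≤ t} := rfl
    rw [hqdef]
    exact congrArg ENNReal.toReal h2
  have hpb : ∀ n b₁ b₂, b₁ ≠ b₂ →
      (μ {ω | X n b₁ ω ≤ t ∧ X n b₂ ω ≤ t}).toReal = p n := by
    intro n b₁ b₂ hne
    have h := hexch n b₁ b₂ 1 2 hne (by omega)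
    have h2 := h.measure_mem_eq ((measurableSet_Iic (a := t)).prod (measurableSet_Iic (a := t)))
    have e1 : ((fun ω => (X n b₁ ω, X n b₂ ω)) ⁻¹' (Set.Iic t ×ˢ Set.Iic t))
        = {ω | X n b₁ ω ≤ t ∧ X n b₂ ω ≤ t} := by
      ext ω; simp [Set.mem_prod]
    have e2 : ((fun ω => (X n 1 ω, X n 2 ω)) ⁻¹' (Set.Iic t ×ˢ Set.Iic t))
        = {ω | X n 1 ω ≤ t ∧ X n 2 ω ≤ t} := by
      ext ω; simp [Set.mem_prod]
    rw [e1, e2] at h2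
    rw [hpdef]
    exact congrArg ENNReal.toReal h2
  -- indicator notation
  set ind : ℕ → ℕ → Ω → ℝ := fun n b ω => if X n b ω ≤ t then (1 : ℝ) else 0 with hinddef
  have hind_eq : ∀ n b, ind n b = Set.indicator {ω | X n b ω ≤ t} (1 : Ω → ℝ) := by
    intro n b; funext ω
    by_cases h : X n b ω ≤ t <;> simp [hinddef, Set.indicator_apply, h]
  have hindprod_eq : ∀ n b₁ b₂, (fun ω => ind n b₁ ω * ind n b₂ ω)
      = Set.indicator ({ω | X n b₁ ω ≤ t} ∩ {ω | X n b₂ ω ≤ t}) (1 : Ω → ℝ) := by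
    intro n b₁ b₂; funext ω
    by_cases h1 : X n b₁ ω ≤ t <;> by_cases h2 : X n b₂ ω ≤ t <;>
      simp [hinddef, Set.indicator_apply, Set.mem_inter_iff, h1, h2]
  have hind_int : ∀ n b, Integrable (ind n b) μ := by
    intro n b; rw [hind_eq]
    exact (integrable_const (1 : ℝ)).indicator (hsm n b)
  have hindprod_int : ∀ n b₁ b₂, Integrable (fun ω => ind n b₁ ω * ind n b₂ ω) μ := by
    intro n b₁ b₂; rw [hindprod_eq]
    exact (integrable_const (1 : ℝ)).indicator ((hsm n b₁).inter (hsm n b₂))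
  have hind_integral : ∀ n b, ∫ ω, ind n b ω ∂μ = q n := by
    intro n b
    rw [show (fun ω => ind n b ω) = ind n b from rfl, hind_eq]
    exact (integral_indicator_one (hsm n b)).trans (hqb n b)
  have hindprod_integral : ∀ n b₁ b₂, b₁ ≠ b₂ →
      ∫ ω, ind n b₁ ω * ind n b₂ ω ∂μ = p n := by
    intro n b₁ b₂ hne
    rw [hindprod_eq]
    refine (integral_indicator_one ((hsm n b₁).inter (hsm n b₂))).trans ?_
    have : ({ω | X n b₁ ω ≤ t} ∩ {ω | X n b₂ ω ≤ t}) = {ω | X n b₁ ω ≤ t ∧ X n b₂ ω ≤ t} := rfl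
    rw [this]; exact hpb n b₁ b₂ hne
  have hindsq_integral : ∀ n b, ∫ ω, ind n b ω * ind n b ω ∂μ = q n := by
    intro n b
    have : (fun ω => ind n b ω * ind n b ω) = ind n b := by
      funext ω; by_cases h : X n b ω ≤ t <;> simp [hinddef, h]
    rw [this]; exact hind_integral n b
  -- sums
  set S : ℕ → Ω → ℝ := fun n ω => ∑ b ∈ Finset.Icc 1 (B n), ind n b ω with hSdef
  set D : ℕ → Ω → ℝ :=
    fun n ω => ∑ b₁ ∈ Finset.Icc 1 (B n), ∑ b₂ ∈ Finset.Icc 1 (B n), ind n b₁ ω * ind n b₂ ω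
    with hDdef
  have hS_int : ∀ n, Integrable (S n) μ := fun n =>
    integrable_finset_sum _ (fun b _ => hind_int n b)
  have hD_int : ∀ n, Integrable (D n) μ := fun n =>
    integrable_finset_sum _ (fun b₁ _ => integrable_finset_sum _ (fun b₂ _ => hindprod_int n b₁ b₂))
  have hS_integral : ∀ n, ∫ ω, S n ω ∂μ = (B n : ℝ) * q n := by
    intro n
    rw [hSdef]
    rw [integral_finset_sum _ (fun b _ => hind_int n b)]
    rw [Finset.sum_congr rfl (fun b _ => hind_integral n b)]
    simp [Nat.card_Icc]
  have hD_integral : ∀ n, ∫ ω, D n ω ∂μ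
      = (B n : ℝ) * ((q n - p n) + (B n : ℝ) * p n) := by
    intro n
    rw [hDdef]
    rw [integral_finset_sum _
      (fun b₁ _ => integrable_finset_sum _ (fun b₂ _ => hindprod_int n b₁ b₂))]
    have hrow : ∀ b₁ ∈ Finset.Icc 1 (B n),
        (∫ ω, ∑ b₂ ∈ Finset.Icc 1 (B n), ind n b₁ ω * ind n b₂ ω ∂μ)
          = (q n - p n) + (B n : ℝ) * p n := by
      intro b₁ hb₁
      rw [integral_finset_sum _ (fun b₂ _ => hindprod_int n b₁ b₂)]
      have hterm : ∀ b₂ ∈ Finset.Icc 1 (B n),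
          (∫ ω, ind n b₁ ω * ind n b₂ ω ∂μ)
            = (if b₁ = b₂ then q n - p n else 0) + p n := by
        intro b₂ _
        by_cases h : b₁ = b₂
        · subst h; simp [hindsq_integral n b₁]
        · simp [h, hindprod_integral n b₁ b₂ h]
      rw [Finset.sum_congr rfl hterm, Finset.sum_add_distrib, Finset.sum_ite_eq, if_pos hb₁]
      simp [Nat.card_Icc]
    rw [Finset.sum_congr rfl hrow]
    simp only [Finset.sum_const, Nat.card_Icc, Nat.add_sub_cancel, nsmul_eq_mul]
  -- pointwise expansion
  have hpt : ∀ n ω,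
      |(B n : ℝ)⁻¹ * S n ω - c| ^ 2
        = (B n : ℝ)⁻¹ * (B n : ℝ)⁻¹ * D n ω - 2 * c * (B n : ℝ)⁻¹ * S n ω + c ^ 2 := by
    intro n ω
    have hd : D n ω = S n ω * S n ω := by
      rw [hDdef, hSdef, Finset.sum_mul_sum]
    rw [sq_abs, hd]; ring
  -- integral formula
  have hInt : ∀ n, Integrable (fun ω => |(B n : ℝ)⁻¹ * S n ω - c| ^ 2) μ := by
    intro n
    have : (fun ω => |(B n : ℝ)⁻¹ * S n ω - c| ^ 2)
        = fun ω => (B n : ℝ)⁻¹ * (B n : ℝ)⁻¹ * D n ω - 2 * c * (B n : ℝ)⁻¹ * S n ω + c ^ 2 :=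
      funext (hpt n)
    rw [this]
    exact (((hD_int n).const_mul _).sub ((hS_int n).const_mul _)).add (integrable_const _)
  have hIval : ∀ n, (∫ ω, |(B n : ℝ)⁻¹ * S n ω - c| ^ 2 ∂μ)
      = (B n : ℝ)⁻¹ * (B n : ℝ)⁻¹ * ((B n : ℝ) * ((q n - p n) + (B n : ℝ) * p n))
        - 2 * c * (B n : ℝ)⁻¹ * ((B n : ℝ) * q n) + c ^ 2 := by
    intro n
    rw [integral_congr_ae (Filter.EventuallyEq.of_eq (funext (hpt n)))]
    have h1 : Integrable (fun ω => (B n : ℝ)⁻¹ * (B n : ℝ)⁻¹ * D n ω) μ :=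
      (hD_int n).const_mul _
    have h2 : Integrable (fun ω => 2 * c * (B n : ℝ)⁻¹ * S n ω) μ :=
      (hS_int n).const_mul _
    have h3 : Integrable (fun ω => (B n : ℝ)⁻¹ * (B n : ℝ)⁻¹ * D n ω
        - 2 * c * (B n : ℝ)⁻¹ * S n ω) μ := h1.sub h2
    rw [integral_add h3 (integrable_const _), integral_sub h1 h2,
      integral_const_mul, integral_const_mul, integral_const]
    rw [hD_integral n, hS_integral n]
    simp
  -- the key formula for B n ≥ 1
  have key : ∀ n, 1 ≤ B n →
      (∫ ω, |(B n : ℝ)⁻¹ * S n ω - c| ^ 2 ∂μ)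
        = (B n : ℝ)⁻¹ * (q n - p n) + p n - 2 * c * q n + c ^ 2 := by
    intro n hn
    have hβ : (B n : ℝ) ≠ 0 := by positivity
    rw [hIval n]
    field_simp
  -- limits
  have hq' : Tendsto q atTop (nhds c) := hmarg t
  have hp' : Tendsto p atTop (nhds (c * c)) := hjoint t t
  have hbinv : Tendsto (fun n => ((B n : ℝ))⁻¹) atTop (nhds 0) :=
    tendsto_inv_atTop_zero.comp (tendsto_natCast_atTop_atTop.comp hB)
  have hlim : Tendsto
      (fun n => (B n : ℝ)⁻¹ * (q n - p n) + p n - 2 * c * q n + c ^ 2) atTop (nhds 0) := by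
    have T := (((hbinv.mul (hq'.sub hp')).add hp').sub ((hq'.const_mul (2 * c)))).add
      (tendsto_const_nhds (x := c ^ 2) (f := atTop))
    have h0 : (0 : ℝ) = 0 * (c - c * c) + c * c - 2 * c * c + c ^ 2 := by ring
    rw [h0]; exact T
  have hL2 : Tendsto (fun n => ∫ ω, |(B n : ℝ)⁻¹ * S n ω - c| ^ 2 ∂μ) atTop (nhds 0) := by
    apply hlim.congr'
    filter_upwards [hB.eventually_ge_atTop 1] with n hn
    exact (key n hn).symm
  constructor
  · exact hL2
  · intro ε hε
    have hbound : ∀ n, μ {ω | ε ≤ |(B n : ℝ)⁻¹ * S n ω - c|}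
        ≤ ENNReal.ofReal ((∫ ω, |(B n : ℝ)⁻¹ * S n ω - c| ^ 2 ∂μ) / ε ^ 2) := by
      intro n
      have hsub : {ω | ε ≤ |(B n : ℝ)⁻¹ * S n ω - c|}
          ⊆ {ω | ε ^ 2 ≤ |(B n : ℝ)⁻¹ * S n ω - c| ^ 2} := by
        intro ω hω
        exact pow_le_pow_left₀ hε.le hω 2
      have hmarkov := mul_meas_ge_le_integral_of_nonneg
        (f := fun ω => |(B n : ℝ)⁻¹ * S n ω - c| ^ 2)
        (Filter.Eventually.of_forall (fun ω => by positivity)) (hInt n) (ε ^ 2)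
      have hfin : μ {ω | ε ^ 2 ≤ |(B n : ℝ)⁻¹ * S n ω - c| ^ 2} ≠ ⊤ := measure_ne_top μ _
      calc μ {ω | ε ≤ |(B n : ℝ)⁻¹ * S n ω - c|}
          ≤ μ {ω | ε ^ 2 ≤ |(B n : ℝ)⁻¹ * S n ω - c| ^ 2} := measure_mono hsub
        _ = ENNReal.ofReal ((μ {ω | ε ^ 2 ≤ |(B n : ℝ)⁻¹ * S n ω - c| ^ 2}).toReal) :=
            (ENNReal.ofReal_toReal hfin).symm
        _ ≤ ENNReal.ofReal ((∫ ω, |(B n : ℝ)⁻¹ * S n ω - c| ^ 2 ∂μ) / ε ^ 2) := by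
            apply ENNReal.ofReal_le_ofReal
            rw [le_div_iff₀ (by positivity)]
            calc (μ {ω | ε ^ 2 ≤ |(B n : ℝ)⁻¹ * S n ω - c| ^ 2}).toReal * ε ^ 2
                = ε ^ 2 * (μ {ω | ε ^ 2 ≤ |(B n : ℝ)⁻¹ * S n ω - c| ^ 2}).toReal := by ring
              _ ≤ _ := hmarkov
    have hro : Tendsto
        (fun n => ENNReal.ofReal ((∫ ω, |(B n : ℝ)⁻¹ * S n ω - c| ^ 2 ∂μ) / ε ^ 2))
        atTop (nhds 0) := by
      have := ENNReal.tendsto_ofReal (hL2.div_const (ε ^ 2))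
      simpa using this
    exact tendsto_of_tendsto_of_tendsto_of_le_of_le tendsto_const_nhds hro
      (fun n => zero_le) hbound
end

section
/- Let F: R^R → [0,1] be a multivariate distribution function and F_n: R^R → [0,1] random distribution functions such that F_n(t) → F(t) in probability as n → ∞ for every t ∈ R^R, where F is continuous. Then sup_{t ∈ R^R} |F_n(t) − F(t)| → 0 in probability as n → ∞. -/
open MeasureTheory Filter
open Set

private lemma grid_exists {R : ℕ} (M : ℕ) (hM0 : 1 ≤ M) (δ' : ℝ) (hδ'pos : 0 < δ') :
    ∃ S : Finset (Fin R → ℝ),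
      ((fun _ : Fin R => (M:ℝ)) ∈ S) ∧
      (∀ i : Fin R, Function.update (fun _ : Fin R => (M:ℝ)) i (-(M:ℝ)) ∈ S) ∧
      ∀ u : Fin R → ℝ, (∀ i, -(M:ℝ) ≤ u i) → (∀ i, u i ≤ (M:ℝ)) →
        ∃ sl ∈ S, ∃ su ∈ S, (∀ i, sl i ≤ u i) ∧ (∀ i, u i ≤ su i) ∧
          sl ∈ Set.Icc (fun _ : Fin R => -(M:ℝ)) (fun _ => (M:ℝ)) ∧
          su ∈ Set.Icc (fun _ : Fin R => -(M:ℝ)) (fun _ => (M:ℝ)) ∧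
          dist sl su < δ' := by
  have hMpos : (0:ℝ) < M := by exact_mod_cast hM0
  set K : ℕ := ⌈2 * (M:ℝ) / δ'⌉₊ + 1 with hKdef
  have hKpos : 0 < K := Nat.succ_pos _
  have hKpos' : (0:ℝ) < K := Nat.cast_pos.2 hKpos
  have hKne : (K:ℝ) ≠ 0 := hKpos'.ne'
  set st : ℝ := 2 * (M:ℝ) / K with hstdef
  have hstpos : 0 < st := div_pos (by linarith) hKpos'
  have hstep : st < δ' := by
    have h1 : 2 * (M:ℝ) / δ' < K := by
      have := Nat.le_ceil (2 * (M:ℝ) / δ')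
      have h2 : (⌈2 * (M:ℝ) / δ'⌉₊ : ℝ) < K := by
        rw [hKdef]; push_cast; linarith
      linarith
    have h2 : 2 * (M:ℝ) < K * δ' := (div_lt_iff₀ hδ'pos).1 h1
    rw [hstdef, div_lt_iff₀ hKpos']
    linarith
  set a : ℕ → ℝ := fun j => -(M:ℝ) + j * st with hadef
  have haK : a K = (M:ℝ) := by
    simp only [hadef, hstdef]
    field_simp
    ring
  have ha0 : a 0 = -(M:ℝ) := by simp [hadef]
  have hamono : Monotone a := by
    intro j k hjk
    simp only [hadef]
    have : (j:ℝ) ≤ k := Nat.cast_le.2 hjk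
    nlinarith [hstpos]
  have hcube_mem : ∀ j ≤ K, a j ∈ Set.Icc (-(M:ℝ)) (M:ℝ) := by
    intro j hj
    exact ⟨ha0 ▸ hamono (Nat.zero_le j), haK ▸ hamono hj⟩
  refine ⟨Fintype.piFinset (fun _ : Fin R => (Finset.range (K+1)).image a), ?_, ?_, ?_⟩
  · rw [Fintype.mem_piFinset]
    intro i
    exact Finset.mem_image.2 ⟨K, Finset.self_mem_range_succ K, haK⟩
  · intro i
    rw [Fintype.mem_piFinset]
    intro j
    by_cases hji : j = i
    · subst hji
      refine Finset.mem_image.2 ⟨0, Finset.mem_range.2 (by omega), ?_⟩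
      rw [ha0, Function.update_self]
    · refine Finset.mem_image.2 ⟨K, Finset.self_mem_range_succ K, ?_⟩
      rw [haK, Function.update_of_ne hji]
  · intro u hul huu
    set g : Fin R → ℕ := fun i => min ⌊(u i + M) / st⌋₊ (K - 1) with hgdef
    have hgK : ∀ i, g i + 1 ≤ K := by
      intro i
      have h1 : g i ≤ K - 1 := min_le_right _ _
      omega
    refine ⟨fun i => a (g i), ?_, fun i => a (g i + 1), ?_, ?_, ?_, ?_, ?_, ?_⟩
    · rw [Fintype.mem_piFinset]
      intro i
      exact Finset.mem_image.2 ⟨g i, Finset.mem_range.2 (by have := hgK i; omega), rfl⟩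
    · rw [Fintype.mem_piFinset]
      intro i
      exact Finset.mem_image.2 ⟨g i + 1, Finset.mem_range.2 (by have := hgK i; omega), rfl⟩
    · -- sl ≤ u
      intro i
      show a (g i) ≤ u i
      have h0 : 0 ≤ (u i + M) / st := div_nonneg (by linarith [hul i]) hstpos.le
      have h1 : (g i : ℝ) ≤ (u i + M) / st :=
        (Nat.cast_le.2 (min_le_left _ _)).trans (Nat.floor_le h0)
      have h2 : (g i : ℝ) * st ≤ u i + M := (le_div_iff₀ hstpos).1 h1
      simp only [hadef]
      linarith
    · -- u ≤ su
      intro i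
      show u i ≤ a (g i + 1)
      rcases le_or_gt ⌊(u i + M) / st⌋₊ (K - 1) with hle | hlt
      · have hgeq : g i = ⌊(u i + M) / st⌋₊ := min_eq_left hle
        have h1 : (u i + (M:ℝ)) / st < (⌊(u i + (M:ℝ)) / st⌋₊ : ℝ) + 1 := Nat.lt_floor_add_one _
        have h2 : u i + (M:ℝ) < ((⌊(u i + (M:ℝ)) / st⌋₊ : ℝ) + 1) * st := (div_lt_iff₀ hstpos).1 h1
        rw [hgeq]
        simp only [hadef]
        push_cast
        linarith
      · have hgeq : g i + 1 = K := by
          have : g i = K - 1 := min_eq_right hlt.le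
          omega
        rw [hgeq, haK]
        exact huu i
    · simp only [Set.mem_Icc, Pi.le_def]
      exact ⟨fun i => (hcube_mem (g i) (by have := hgK i; omega)).1,
        fun i => (hcube_mem (g i) (by have := hgK i; omega)).2⟩
    · simp only [Set.mem_Icc, Pi.le_def]
      exact ⟨fun i => (hcube_mem (g i + 1) (hgK i)).1,
        fun i => (hcube_mem (g i + 1) (hgK i)).2⟩
    · rw [dist_pi_lt_iff hδ'pos]
      intro i
      rw [Real.dist_eq]
      have heq : a (g i) - a (g i + 1) = -st := by
        simp only [hadef]
        push_cast
        ring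
      rw [heq, abs_neg, abs_of_pos hstpos]
      exact hstep


private lemma meas_toReal_mono' {α : Type*} [MeasurableSpace α] (Q : Measure α)
    [IsFiniteMeasure Q] {A B : Set α} (h : A ⊆ B) : (Q A).toReal ≤ (Q B).toReal :=
  ENNReal.toReal_mono (measure_ne_top Q _) (measure_mono h)

private lemma meas_toReal_le_add' {α : Type*} [MeasurableSpace α] (Q : Measure α)
    [IsFiniteMeasure Q] {A B C : Set α} (h : A ⊆ B ∪ C) :
    (Q A).toReal ≤ (Q B).toReal + (Q C).toReal := by
  have h1 : Q A ≤ Q B + Q C := (measure_mono h).trans (measure_union_le _ _)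
  have h2 := ENNReal.toReal_mono (ENNReal.add_ne_top.2 ⟨measure_ne_top _ _, measure_ne_top _ _⟩) h1
  rwa [ENNReal.toReal_add (measure_ne_top _ _) (measure_ne_top _ _)] at h2

private lemma meas_compl_toReal' {α : Type*} [MeasurableSpace α] (Q : Measure α)
    [IsProbabilityMeasure Q] {C : Set α} (hC : MeasurableSet C) :
    (Q Cᶜ).toReal = 1 - (Q C).toReal := by
  rw [prob_compl_eq_one_sub hC, ENNReal.toReal_sub_of_le prob_le_one ENNReal.one_ne_top,
    ENNReal.toReal_one]

private lemma polya_key {R : ℕ} (P₀ Q : Measure (Fin R → ℝ))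
    [IsProbabilityMeasure P₀] [IsProbabilityMeasure Q]
    {δ δ' : ℝ} (hδ : 0 < δ) (hδ'pos : 0 < δ')
    {M : ℕ} (hM0 : 1 ≤ M)
    (hMA : 1 - δ ≤ (P₀ (Set.Iic (fun _ : Fin R => (M:ℝ)))).toReal)
    (hMB : ∀ i : Fin R, (P₀ {x : Fin R → ℝ | x i ≤ -(M:ℝ)}).toReal ≤ δ)
    (hδ' : ∀ x ∈ Set.Icc (fun _ : Fin R => -(M:ℝ)) (fun _ => (M:ℝ)),
      ∀ y ∈ Set.Icc (fun _ : Fin R => -(M:ℝ)) (fun _ => (M:ℝ)),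
      dist x y < δ' → dist (P₀ (Set.Iic x)).toReal (P₀ (Set.Iic y)).toReal < δ)
    {S : Finset (Fin R → ℝ)}
    (hTS : (fun _ : Fin R => (M:ℝ)) ∈ S)
    (hsiS : ∀ i : Fin R, Function.update (fun _ : Fin R => (M:ℝ)) i (-(M:ℝ)) ∈ S)
    (hbr : ∀ u : Fin R → ℝ, (∀ i, -(M:ℝ) ≤ u i) → (∀ i, u i ≤ (M:ℝ)) →
      ∃ sl ∈ S, ∃ su ∈ S, (∀ i, sl i ≤ u i) ∧ (∀ i, u i ≤ su i) ∧
        sl ∈ Set.Icc (fun _ : Fin R => -(M:ℝ)) (fun _ => (M:ℝ)) ∧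
        su ∈ Set.Icc (fun _ : Fin R => -(M:ℝ)) (fun _ => (M:ℝ)) ∧
        dist sl su < δ')
    (t : Fin R → ℝ) :
    |(Q (Set.Iic t)).toReal - (P₀ (Set.Iic t)).toReal| ≤
      6*δ + 6 * ∑ s ∈ S, |(Q (Set.Iic s)).toReal - (P₀ (Set.Iic s)).toReal| := by
  set D : ℝ := ∑ s ∈ S, |(Q (Set.Iic s)).toReal - (P₀ (Set.Iic s)).toReal| with hDdef
  have hD0 : 0 ≤ D := Finset.sum_nonneg fun s _ => abs_nonneg _
  have hDs : ∀ s ∈ S, |(Q (Set.Iic s)).toReal - (P₀ (Set.Iic s)).toReal| ≤ D := by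
    intro s hs
    rw [hDdef]
    exact Finset.single_le_sum
      (f := fun u => |(Q (Set.Iic u)).toReal - (P₀ (Set.Iic u)).toReal|)
      (fun u _ => abs_nonneg _) hs
  set T : Fin R → ℝ := fun _ => (M:ℝ) with hTdef
  have hFT : 1 - (P₀ (Set.Iic T)).toReal ≤ δ := by linarith [hMA]
  have hQT : 1 - (Q (Set.Iic T)).toReal ≤ δ + D := by
    have h2 := abs_le.1 (hDs T hTS)
    linarith [hFT, h2.1, h2.2]
  set t' : Fin R → ℝ := fun i => min (t i) (M:ℝ) with ht'def
  have ht't : t' ≤ t := fun i => min_le_left _ _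
  have hIicT : MeasurableSet (Set.Iic T) := measurableSet_Iic
  have hcomplQ : (Q (Set.Iic T)ᶜ).toReal = 1 - (Q (Set.Iic T)).toReal := meas_compl_toReal' Q hIicT
  have hcomplP : (P₀ (Set.Iic T)ᶜ).toReal = 1 - (P₀ (Set.Iic T)).toReal :=
    meas_compl_toReal' P₀ hIicT
  have hsub1 : Set.Iic t ⊆ Set.Iic t' ∪ (Set.Iic T)ᶜ := by
    intro x hx
    by_cases hxT : x ∈ Set.Iic T
    · left
      simp only [Set.mem_Iic, Pi.le_def] at hx hxT ⊢
      intro i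
      exact le_min (hx i) (hxT i)
    · exact Or.inr hxT
  have hQtail : (Q (Set.Iic t)).toReal ≤ (Q (Set.Iic t')).toReal + (1 - (Q (Set.Iic T)).toReal) := by
    have := meas_toReal_le_add' Q hsub1
    rwa [hcomplQ] at this
  have hPtail : (P₀ (Set.Iic t)).toReal ≤
      (P₀ (Set.Iic t')).toReal + (1 - (P₀ (Set.Iic T)).toReal) := by
    have := meas_toReal_le_add' P₀ hsub1
    rwa [hcomplP] at this
  have hmonoQ : (Q (Set.Iic t')).toReal ≤ (Q (Set.Iic t)).toReal :=
    meas_toReal_mono' Q (Set.Iic_subset_Iic.2 ht't)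
  have hmonoP : (P₀ (Set.Iic t')).toReal ≤ (P₀ (Set.Iic t)).toReal :=
    meas_toReal_mono' P₀ (Set.Iic_subset_Iic.2 ht't)
  have hinner : |(Q (Set.Iic t')).toReal - (P₀ (Set.Iic t')).toReal| ≤ 3*δ + 3*D := by
    by_cases hcase : ∀ i, -(M:ℝ) ≤ t i
    · -- grid case
      have ht'lb : ∀ i, -(M:ℝ) ≤ t' i := fun i => le_min (hcase i) (by
        have : (0:ℝ) < M := by exact_mod_cast hM0
        linarith)
      have ht'ub : ∀ i, t' i ≤ (M:ℝ) := fun i => min_le_right _ _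
      obtain ⟨sl, hslS, su, hsuS, hsl_le, hle_su, hslcube, hsucube, hdistslsu⟩ :=
        hbr t' ht'lb ht'ub
      have hFbracket : (P₀ (Set.Iic su)).toReal - (P₀ (Set.Iic sl)).toReal ≤ δ := by
        have h1 := hδ' sl hslcube su hsucube hdistslsu
        rw [Real.dist_eq] at h1
        have h2 := abs_lt.1 h1
        linarith [h2.1]
      have hQl := abs_le.1 (hDs sl hslS)
      have hQu := abs_le.1 (hDs su hsuS)
      have hms1 : (P₀ (Set.Iic sl)).toReal ≤ (P₀ (Set.Iic t')).toReal :=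
        meas_toReal_mono' P₀ (Set.Iic_subset_Iic.2 hsl_le)
      have hms2 : (P₀ (Set.Iic t')).toReal ≤ (P₀ (Set.Iic su)).toReal :=
        meas_toReal_mono' P₀ (Set.Iic_subset_Iic.2 hle_su)
      have hmq1 : (Q (Set.Iic sl)).toReal ≤ (Q (Set.Iic t')).toReal :=
        meas_toReal_mono' Q (Set.Iic_subset_Iic.2 hsl_le)
      have hmq2 : (Q (Set.Iic t')).toReal ≤ (Q (Set.Iic su)).toReal :=
        meas_toReal_mono' Q (Set.Iic_subset_Iic.2 hle_su)
      rw [abs_le]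
      constructor <;>
        linarith [hQl.1, hQl.2, hQu.1, hQu.2, hFbracket, hms1, hms2, hmq1, hmq2, hD0, hδ.le]
    · -- tail case
      push_neg at hcase
      obtain ⟨i, hi⟩ := hcase
      set si : Fin R → ℝ := Function.update T i (-(M:ℝ)) with hsidef
      have hsiS' : si ∈ S := hsiS i
      have ht'i : t' i ≤ -(M:ℝ) := by
        have h1 : t' i ≤ t i := min_le_left _ _
        linarith [hi.le]
      have hhalf : Set.Iic t' ⊆ {x : Fin R → ℝ | x i ≤ -(M:ℝ)} := by
        intro x hx
        simp only [Set.mem_Iic, Pi.le_def] at hx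
        simp only [Set.mem_setOf_eq]
        linarith [hx i, ht'i]
      have hFt' : (P₀ (Set.Iic t')).toReal ≤ δ :=
        le_trans (meas_toReal_mono' P₀ hhalf) (hMB i)
      have hFsi : (P₀ (Set.Iic si)).toReal ≤ δ := by
        refine le_trans (meas_toReal_mono' P₀ ?_) (hMB i)
        intro x hx
        simp only [Set.mem_Iic, Pi.le_def] at hx
        simp only [Set.mem_setOf_eq]
        have := hx i
        rwa [hsidef, Function.update_self] at this
      have hsub2 : Set.Iic t' ⊆ Set.Iic si ∪ (Set.Iic T)ᶜ := by
        intro x hx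
        by_cases hxT : x ∈ Set.Iic T
        · left
          have hxi := hhalf hx
          simp only [Set.mem_setOf_eq] at hxi
          simp only [Set.mem_Iic, Pi.le_def] at hxT ⊢
          intro j
          by_cases hji : j = i
          · subst hji
            rw [hsidef, Function.update_self]
            exact hxi
          · rw [hsidef, Function.update_of_ne hji]
            exact hxT j
        · exact Or.inr hxT
      have hQt' : (Q (Set.Iic t')).toReal ≤ (Q (Set.Iic si)).toReal + (1 - (Q (Set.Iic T)).toReal) := by
        have := meas_toReal_le_add' Q hsub2
        rwa [hcomplQ] at this
      have hQsi := abs_le.1 (hDs si hsiS')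
      have hFq0 : (0:ℝ) ≤ (Q (Set.Iic t')).toReal := ENNReal.toReal_nonneg
      have hF0 : (0:ℝ) ≤ (P₀ (Set.Iic t')).toReal := ENNReal.toReal_nonneg
      rw [abs_le]
      constructor <;>
        linarith [hQt', hQsi.1, hQsi.2, hQT, hFt', hFsi, hFq0, hF0, hD0, hδ.le]
  have h2 := abs_le.1 hinner
  rw [abs_le]
  constructor <;>
    linarith [h2.1, h2.2, hQtail, hPtail, hmonoQ, hmonoP, hFT, hQT, hD0, hδ.le]


/-- Multivariate Pólya theorem in probability: if the random distribution
functions `t ↦ ν_n(ω)(Iic t)` converge in probability pointwise to the continuous distribution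
function `t ↦ P₀(Iic t)` of a probability measure `P₀` on `ℝ^R`, then the convergence is
uniform in probability. -/
theorem polya_uniform_convergence_in_probability
    {Ω : Type*} [MeasurableSpace Ω] (μ : Measure Ω) [IsProbabilityMeasure μ]
    {R : ℕ} (ν : ℕ → Ω → Measure (Fin R → ℝ))
    (hν : ∀ n ω, IsProbabilityMeasure (ν n ω))
    (P₀ : Measure (Fin R → ℝ)) [IsProbabilityMeasure P₀]
    (hcont : Continuous fun t : Fin R → ℝ => (P₀ (Set.Iic t)).toReal)
    (hpt : ∀ t : Fin R → ℝ, ∀ ε : ℝ, 0 < ε →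
      Tendsto (fun n =>
        μ {ω | ε ≤ |(ν n ω (Set.Iic t)).toReal - (P₀ (Set.Iic t)).toReal|}) atTop (nhds 0)) :
    ∀ ε : ℝ, 0 < ε →
      Tendsto (fun n =>
        μ {ω | ε ≤ ⨆ t : Fin R → ℝ,
          |(ν n ω (Set.Iic t)).toReal - (P₀ (Set.Iic t)).toReal|}) atTop (nhds 0) := by
  intro ε hε
  set δ : ℝ := ε / 12 with hδdef
  have hδ : 0 < δ := by positivity
  -- Step 1: choose the truncation level M
  obtain ⟨M, hM0, hMA, hMB⟩ : ∃ M : ℕ, 1 ≤ M ∧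
      1 - δ ≤ (P₀ (Set.Iic (fun _ : Fin R => (M:ℝ)))).toReal ∧
      ∀ i : Fin R, (P₀ {x : Fin R → ℝ | x i ≤ -(M:ℝ)}).toReal ≤ δ := by
    have hA : Tendsto (fun M : ℕ => P₀ (Set.Iic (fun _ : Fin R => (M:ℝ)))) atTop
        (nhds (P₀ (⋃ M : ℕ, Set.Iic (fun _ : Fin R => (M:ℝ))))) := by
      apply tendsto_measure_iUnion_atTop
      intro m n hmn x hx i
      have : (m:ℝ) ≤ (n:ℝ) := by exact_mod_cast hmn
      exact le_trans (hx i) this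
    have hU : (⋃ M : ℕ, Set.Iic (fun _ : Fin R => (M:ℝ))) = Set.univ := by
      ext x
      simp only [Set.mem_iUnion, Set.mem_Iic, Set.mem_univ, iff_true]
      obtain ⟨C, hC⟩ := Finite.exists_le x
      obtain ⟨n, hn⟩ := exists_nat_ge C
      exact ⟨n, fun i => (hC i).trans hn⟩
    rw [hU, measure_univ] at hA
    have hA' : Tendsto (fun M : ℕ => (P₀ (Set.Iic (fun _ : Fin R => (M:ℝ)))).toReal) atTop
        (nhds 1) := by
      have := (ENNReal.tendsto_toReal ENNReal.one_ne_top).comp hA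
      simpa [Function.comp_def] using this
    have hAev : ∀ᶠ M : ℕ in atTop, 1 - δ ≤ (P₀ (Set.Iic (fun _ : Fin R => (M:ℝ)))).toReal :=
      hA'.eventually (eventually_ge_nhds (by linarith))
    have hBev : ∀ᶠ M : ℕ in atTop, ∀ i : Fin R,
        (P₀ {x : Fin R → ℝ | x i ≤ -(M:ℝ)}).toReal ≤ δ := by
      rw [eventually_all]
      intro i
      have hB : Tendsto (fun M : ℕ => P₀ {x : Fin R → ℝ | x i ≤ -(M:ℝ)}) atTop
          (nhds (P₀ (⋂ M : ℕ, {x : Fin R → ℝ | x i ≤ -(M:ℝ)}))) := by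
        apply tendsto_measure_iInter_atTop
        · intro M
          exact ((measurable_pi_apply i) measurableSet_Iic).nullMeasurableSet
        · intro m n hmn x hx
          simp only [Set.mem_setOf_eq] at hx ⊢
          have : (m:ℝ) ≤ (n:ℝ) := by exact_mod_cast hmn
          linarith
        · exact ⟨0, measure_ne_top _ _⟩
      have hI : (⋂ M : ℕ, {x : Fin R → ℝ | x i ≤ -(M:ℝ)}) = ∅ := by
        ext x
        simp only [Set.mem_iInter, Set.mem_setOf_eq, Set.mem_empty_iff_false, iff_false,
          not_forall]
        obtain ⟨n, hn⟩ := exists_nat_ge (-(x i) + 1)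
        exact ⟨n, by push_neg; linarith⟩
      rw [hI, measure_empty] at hB
      have hB' : Tendsto (fun M : ℕ => (P₀ {x : Fin R → ℝ | x i ≤ -(M:ℝ)}).toReal) atTop
          (nhds 0) := by
        have := (ENNReal.tendsto_toReal ENNReal.zero_ne_top).comp hB
        simpa [Function.comp_def] using this
      exact hB'.eventually (eventually_le_nhds hδ)
    obtain ⟨M, hM1, hM2, hM3⟩ := ((eventually_ge_atTop 1).and (hAev.and hBev)).exists
    exact ⟨M, hM1, hM2, hM3⟩
  -- Step 2: uniform continuity on the compact cube
  have hcube : IsCompact (Set.Icc (fun _ : Fin R => -(M:ℝ)) (fun _ => (M:ℝ))) := isCompact_Icc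
  have hUC := hcube.uniformContinuousOn_of_continuous hcont.continuousOn
  rw [Metric.uniformContinuousOn_iff] at hUC
  obtain ⟨δ', hδ'pos, hδ'⟩ := hUC δ hδ
  -- Step 3: the finite grid
  obtain ⟨S, hTS, hsiS, hbr⟩ := grid_exists M hM0 δ' hδ'pos
  have hSne : S.Nonempty := ⟨_, hTS⟩
  have hNpos : (0:ℝ) < (S.card : ℝ) := by exact_mod_cast Finset.card_pos.2 hSne
  set ε' : ℝ := ε / (12 * (S.card : ℝ)) with hε'def
  have hε'pos : 0 < ε' := by
    rw [hε'def]
    exact div_pos hε (mul_pos (by norm_num) hNpos)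
  -- Step 4: event inclusion
  have hincl : ∀ n,
      {ω | ε ≤ ⨆ t : Fin R → ℝ,
        |(ν n ω (Set.Iic t)).toReal - (P₀ (Set.Iic t)).toReal|} ⊆
      ⋃ s ∈ S, {ω | ε' ≤ |(ν n ω (Set.Iic s)).toReal - (P₀ (Set.Iic s)).toReal|} := by
    intro n ω hω
    simp only [Set.mem_setOf_eq] at hω
    haveI := hν n ω
    set D : ℝ := ∑ s ∈ S, |(ν n ω (Set.Iic s)).toReal - (P₀ (Set.Iic s)).toReal| with hD
    have hD0 : 0 ≤ D := Finset.sum_nonneg fun s _ => abs_nonneg _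
    have hkey : ∀ t : Fin R → ℝ,
        |(ν n ω (Set.Iic t)).toReal - (P₀ (Set.Iic t)).toReal| ≤ 6*δ + 6*D := by
      intro t
      rw [hD]
      exact polya_key P₀ (ν n ω) hδ hδ'pos hM0 hMA hMB hδ' hTS hsiS hbr t
    have hsup : (⨆ t : Fin R → ℝ,
        |(ν n ω (Set.Iic t)).toReal - (P₀ (Set.Iic t)).toReal|) ≤ 6*δ + 6*D :=
      Real.iSup_le (fun t => hkey t) (by linarith)
    have hDge : ε/12 ≤ D := by
      have h1 : ε ≤ 6*δ + 6*D := le_trans hω hsup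
      rw [hδdef] at h1
      linarith
    by_contra hcon
    simp only [Set.mem_iUnion, Set.mem_setOf_eq, not_exists, not_le] at hcon
    have hlt : D < ∑ _s ∈ S, ε' :=
      Finset.sum_lt_sum_of_nonempty hSne (fun s hs => hcon s hs)
    rw [Finset.sum_const, nsmul_eq_mul] at hlt
    have hcard : (S.card : ℝ) * ε' = ε/12 := by
      rw [hε'def]
      field_simp
    linarith [hDge, hlt, hcard]
  -- Step 5: union bound and squeeze
  have hsum : Tendsto (fun n => ∑ s ∈ S,
      μ {ω | ε' ≤ |(ν n ω (Set.Iic s)).toReal - (P₀ (Set.Iic s)).toReal|}) atTop (nhds 0) := by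
    have := tendsto_finset_sum S (fun s _ => hpt s ε' hε'pos)
    simpa using this
  refine tendsto_of_tendsto_of_tendsto_of_le_of_le tendsto_const_nhds hsum
    (fun n => zero_le) (fun n => ?_)
  exact le_trans (measure_mono (hincl n)) (measure_biUnion_finset_le S _)
end
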